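/- Let A ∈ ℝ^{m×m}. All entries of the matrix exponential e^{At} are nonnegative for every t ≥ 0 if and only if all off-diagonal entries of A are nonnegative (i.e., A is a Metzler matrix). -/

import Mathlib

open NormedSpace

private lemma pow_entry_nonneg {m : ℕ} {B : Matrix (Fin m) (Fin m) ℝ}
    (hB : ∀ i j, 0 ≤ B i j) : ∀ (n : ℕ) (i j), 0 ≤ (B ^ n) i j := by
  intro n
  induction n with
  | zero =>
    intro i j
    simp only [pow_zero, Matrix.one_apply]
    split <;> norm_num
  | succ n ih =>
    intro i j
    rw [pow_succ, Matrix.mul_apply]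
    exact Finset.sum_nonneg fun k _ => mul_nonneg (ih i k) (hB k j)

private lemma exp_entry_nonneg {m : ℕ} {B : Matrix (Fin m) (Fin m) ℝ}
    (hB : ∀ i j, 0 ≤ B i j) (i j : Fin m) : 0 ≤ exp B i j := by
  letI : SeminormedRing (Matrix (Fin m) (Fin m) ℝ) := Matrix.linftyOpSemiNormedRing
  letI : NormedRing (Matrix (Fin m) (Fin m) ℝ) := Matrix.linftyOpNormedRing
  letI : NormedAlgebra ℝ (Matrix (Fin m) (Fin m) ℝ) := Matrix.linftyOpNormedAlgebra
  have hs : Summable fun n : ℕ => ((n.factorial : ℝ)⁻¹) • B ^ n :=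
    expSeries_summable' (𝕂 := ℝ) B
  rw [congrFun (exp_eq_tsum ℝ) B]
  erw [tsum_apply hs, tsum_apply (Pi.summable.mp hs i)]
  refine tsum_nonneg fun n => ?_
  have : (((n.factorial : ℝ)⁻¹) • B ^ n) i j = (n.factorial : ℝ)⁻¹ * (B ^ n) i j := rfl
  rw [this]
  exact mul_nonneg (by positivity) (pow_entry_nonneg hB n i j)

/-- All entries of `e^{tA}` are nonnegative for every `t ≥ 0` iff all
off-diagonal entries of `A` are nonnegative (i.e. `A` is Metzler). -/
theorem matrix_exp_nonneg_iff_metzler (m : ℕ) (A : Matrix (Fin m) (Fin m) ℝ) :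
    (∀ t : ℝ, 0 ≤ t → ∀ i j, 0 ≤ NormedSpace.exp (t • A) i j) ↔
      (∀ i j, i ≠ j → 0 ≤ A i j) := by
  constructor
  · intro h i j hij
    letI : SeminormedRing (Matrix (Fin m) (Fin m) ℝ) := Matrix.linftyOpSemiNormedRing
    letI : NormedRing (Matrix (Fin m) (Fin m) ℝ) := Matrix.linftyOpNormedRing
    letI : NormedAlgebra ℝ (Matrix (Fin m) (Fin m) ℝ) := Matrix.linftyOpNormedAlgebra
    -- entry evaluation as a continuous linear map
    have hcont : Continuous fun X : Matrix (Fin m) (Fin m) ℝ => X i j :=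
      (continuous_apply j).comp (continuous_apply i)
    let L : Matrix (Fin m) (Fin m) ℝ →L[ℝ] ℝ :=
      { toFun := fun X => X i j
        map_add' := fun _ _ => rfl
        map_smul' := fun _ _ => rfl
        cont := hcont }
    have hd : HasDerivAt (fun u : ℝ => exp (u • A)) (exp ((0:ℝ) • A) * A) 0 :=
      hasDerivAt_exp_smul_const A (0:ℝ)
    have hd' : HasDerivAt (fun u : ℝ => exp (u • A) i j) (A i j) 0 := by
      have := (L.hasFDerivAt.comp_hasDerivAt 0 hd)
      simp only [zero_smul, exp_zero, one_mul] at this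
      exact this
    have hslope : Filter.Tendsto (slope (fun u : ℝ => exp (u • A) i j) 0)
        (nhdsWithin 0 (Set.Ioi 0)) (nhds (A i j)) :=
      (hasDerivAt_iff_tendsto_slope.mp hd').mono_left
        (nhdsWithin_mono 0 (fun x hx => ne_of_gt hx))
    refine ge_of_tendsto hslope ?_
    filter_upwards [self_mem_nhdsWithin] with t ht
    have ht' : (0:ℝ) < t := ht
    have h0 : exp ((0:ℝ) • A) i j = 0 := by
      rw [zero_smul, exp_zero, Matrix.one_apply_ne hij]
    rw [slope_def_field]
    have : exp ((0:ℝ) • A) i j = 0 := h0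
    rw [zero_smul, exp_zero, Matrix.one_apply_ne hij, sub_zero, sub_zero]
    exact div_nonneg (h t ht'.le i j) ht'.le
  · intro hA t ht i j
    set c : ℝ := ∑ k, |A k k| with hc
    have hcnn : 0 ≤ c := Finset.sum_nonneg fun k _ => abs_nonneg _
    have hB : ∀ i' j', 0 ≤ (t • (A + c • (1 : Matrix (Fin m) (Fin m) ℝ))) i' j' := by
      intro i' j'
      have : (t • (A + c • (1 : Matrix (Fin m) (Fin m) ℝ))) i' j'
          = t * (A i' j' + c * (1 : Matrix (Fin m) (Fin m) ℝ) i' j') := rfl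
      rw [this]
      refine mul_nonneg ht ?_
      by_cases hij : i' = j'
      · subst hij
        rw [Matrix.one_apply_eq]
        have h1 : |A i' i'| ≤ c := by
          refine Finset.single_le_sum (f := fun k => |A k k|)
            (fun k _ => abs_nonneg _) (Finset.mem_univ i')
        have := neg_abs_le (A i' i')
        linarith
      · rw [Matrix.one_apply_ne hij, mul_zero, add_zero]
        exact hA i' j' hij
    have hsplit : t • A = t • (A + c • (1 : Matrix (Fin m) (Fin m) ℝ))
        + (-(t * c)) • (1 : Matrix (Fin m) (Fin m) ℝ) := by
      rw [smul_add, add_assoc, smul_smul, ← add_smul]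
      simp
    have hcomm : Commute (t • (A + c • (1 : Matrix (Fin m) (Fin m) ℝ)))
        ((-(t * c)) • (1 : Matrix (Fin m) (Fin m) ℝ)) :=
      (Commute.one_right _).smul_right _
    rw [hsplit, Matrix.exp_add_of_commute _ _ hcomm, Matrix.mul_apply]
    refine Finset.sum_nonneg fun k _ => mul_nonneg (exp_entry_nonneg hB i k) ?_
    have h1 : (-(t * c)) • (1 : Matrix (Fin m) (Fin m) ℝ)
        = Matrix.diagonal (fun _ => -(t * c)) := Matrix.smul_one_eq_diagonal _
    rw [h1, Matrix.exp_diagonal]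
    rcases eq_or_ne k j with rfl | hkj
    · rw [Matrix.diagonal_apply_eq]
      rw [Pi.coe_exp, ← Real.exp_eq_exp_ℝ]
      positivity
    · rw [Matrix.diagonal_apply_ne _ hkj]
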